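/- Let V be a finite-dimensional nonzero vector space over an algebraically closed field F, and let A, A* be linear endomorphisms of V such that no proper nonzero subspace of V is invariant under both A and A*. Then the identity map is the unique F-algebra automorphism of End(V) that fixes both A and A*. -/

import Mathlib

open Module LinearMap

/-- Schur's lemma: an `S`-linear endomorphism of a simple `S`-module which is a
finite-dimensional space over an algebraically closed field is scalar. -/
theorem schur_scalar {F V : Type*} [Field F] [IsAlgClosed F] [AddCommGroup V] [Module F V]
    [FiniteDimensional F V] [Nontrivial V] (S : Subalgebra F (Module.End F V))
    [IsSimpleModule S V] (f : V →ₗ[S] V) : ∃ c : F, ∀ v, f v = c • v := by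
  let f' : V →ₗ[F] V :=
    { toFun := f
      map_add' := f.map_add
      map_smul' := fun c v => by
        simp only [RingHom.id_apply]
        rw [← algebraMap_smul (↥S) c v, f.map_smul, algebraMap_smul] }
  obtain ⟨c, hc⟩ := Module.End.exists_eigenvalue f'
  obtain ⟨v₀, hv₀⟩ := hc.exists_hasEigenvector
  refine ⟨c, ?_⟩
  let p : Submodule S V :=
    { carrier := {v | f v = c • v}
      add_mem' := fun {a b} ha hb => by
        simp only [Set.mem_setOf_eq] at *
        rw [f.map_add, ha, hb, smul_add]
      zero_mem' := by simp
      smul_mem' := fun s v hv => by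
        simp only [Set.mem_setOf_eq] at *
        rw [f.map_smul, hv, smul_comm] }
  have hp : p = ⊤ := by
    refine (eq_bot_or_eq_top p).resolve_left fun h => hv₀.2 ?_
    have : v₀ ∈ p := hv₀.apply_eq_smul
    rw [h] at this
    simpa using this
  intro v
  have : v ∈ p := hp ▸ Submodule.mem_top
  exact this

/-- Burnside: a subalgebra of `End F V` acting irreducibly on a nonzero finite-dimensional
space over an algebraically closed field is everything. -/
theorem burnside_eq_top {F V : Type*} [Field F] [IsAlgClosed F] [AddCommGroup V] [Module F V]
    [FiniteDimensional F V] [Nontrivial V] (S : Subalgebra F (Module.End F V))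
    [IsSimpleModule S V] : S = ⊤ := by
  classical
  rw [eq_top_iff]
  rintro T -
  let b := Module.finBasis F V
  set n := Module.finrank F V with hn
  haveI : IsSemisimpleModule S (Fin n → V) :=
    isSemisimpleModule_of_isSemisimpleModule_submodule'
      (p := fun i => LinearMap.range (LinearMap.single (↥S) (fun _ : Fin n => V) i))
      (fun i => IsSemisimpleModule.range _) (LinearMap.iSup_range_single _ _)
  let x₀ : Fin n → V := fun i => b i
  let W : Submodule S (Fin n → V) := Submodule.span S {x₀}
  obtain ⟨W', hW'⟩ := exists_isCompl W
  let π : (Fin n → V) →ₗ[S] (Fin n → V) := W.subtype.comp (W.linearProjOfIsCompl W' hW')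
  have hπ_mem : ∀ x, π x ∈ W := fun x => (W.linearProjOfIsCompl W' hW' x).2
  have hπ_id : ∀ x ∈ W, π x = x := fun x hx => by
    show (W.subtype) (W.linearProjOfIsCompl W' hW' x) = x
    erw [show x = ((⟨x, hx⟩ : W) : Fin n → V) from rfl,
      Submodule.linearProjOfIsCompl_apply_left hW' ⟨x, hx⟩]; rfl
  have hcomp : ∀ i j : Fin n, ∃ c : F, ∀ v : V, π (Pi.single j v) i = c • v := by
    intro i j
    have hadd : ∀ a b' : V, (Pi.single j (a + b') : Fin n → V) =
        Pi.single j a + Pi.single j b' := fun a b' => by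
      funext k
      by_cases hk : k = j
      · subst hk; simp
      · simp [Pi.single_eq_of_ne hk]
    have hsmul : ∀ (s : S) (v : V), (Pi.single j (s • v) : Fin n → V) =
        s • (Pi.single j v : Fin n → V) := fun s v => by
      funext k
      by_cases hk : k = j
      · subst hk; simp
      · simp [Pi.single_eq_of_ne hk]
    refine schur_scalar S
      { toFun := fun v => π (Pi.single j v) i
        map_add' := fun a b' => by
          show π (Pi.single j (a + b')) i = π (Pi.single j a) i + π (Pi.single j b') i
          rw [hadd, map_add]; rfl
        map_smul' := fun s v => by
          show π (Pi.single j (s • v)) i = s • π (Pi.single j v) i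
          rw [hsmul, map_smul]; rfl }
  choose c hc using hcomp
  have hπ_comp : ∀ (x : Fin n → V) (i : Fin n), π x i = ∑ j, c i j • x j := by
    intro x i
    conv_lhs => rw [← Finset.univ_sum_single x]
    rw [map_sum]
    rw [Finset.sum_apply]
    exact Finset.sum_congr rfl fun j _ => hc i j (x j)
  have hx₀W : x₀ ∈ W := Submodule.mem_span_singleton_self x₀
  have key : π (fun j => T (x₀ j)) = fun j => T (x₀ j) := by
    funext i
    rw [hπ_comp]
    calc ∑ j, c i j • T (x₀ j) = T (∑ j, c i j • x₀ j) := by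
          rw [map_sum]
          exact Finset.sum_congr rfl fun j _ => (T.map_smul _ _).symm
      _ = T (π x₀ i) := by rw [hπ_comp]
      _ = T (x₀ i) := by rw [hπ_id x₀ hx₀W]
  have hTW : (fun j => T (x₀ j)) ∈ W := key ▸ hπ_mem _
  obtain ⟨s, hs⟩ := Submodule.mem_span_singleton.mp hTW
  have : (s : Module.End F V) = T := by
    refine b.ext fun i => ?_
    have := congrFun hs i
    exact this
  exact this ▸ s.2

theorem stmt_2 {F V : Type*} [Field F] [IsAlgClosed F] [AddCommGroup V] [Module F V]
    [FiniteDimensional F V] [Nontrivial V]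
    (A Astar : Module.End F V)
    (hirr : ∀ W : Submodule F V, (∀ v ∈ W, A v ∈ W) → (∀ v ∈ W, Astar v ∈ W) →
      W = ⊥ ∨ W = ⊤)
    (φ : Module.End F V ≃ₐ[F] Module.End F V)
    (hA : φ A = A) (hAstar : φ Astar = Astar) :
    ∀ X : Module.End F V, φ X = X := by
  set S : Subalgebra F (Module.End F V) := Algebra.adjoin F {A, Astar} with hS
  haveI : IsSimpleModule S V := by
    refine { eq_bot_or_eq_top := fun p => ?_ }
    let W : Submodule F V :=
      { carrier := p
        add_mem' := fun ha hb => p.add_mem ha hb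
        zero_mem' := p.zero_mem
        smul_mem' := fun r v hv => by
          have := p.smul_mem (algebraMap F S r) hv
          rwa [algebraMap_smul] at this }
    have hmem : ∀ v, v ∈ W ↔ v ∈ p := fun v => Iff.rfl
    have hAW : ∀ v ∈ W, A v ∈ W := fun v hv =>
      p.smul_mem ⟨A, Algebra.subset_adjoin (by simp)⟩ hv
    have hAstarW : ∀ v ∈ W, Astar v ∈ W := fun v hv =>
      p.smul_mem ⟨Astar, Algebra.subset_adjoin (by simp)⟩ hv
    rcases hirr W hAW hAstarW with h | h
    · left
      ext v
      rw [← hmem v, h]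
      simp
    · right
      ext v
      rw [← hmem v, h]
      simp
  have htop : S = ⊤ := burnside_eq_top S
  intro X
  have hX : X ∈ S := htop ▸ Algebra.mem_top
  have hle : S ≤ AlgHom.equalizer (φ : Module.End F V →ₐ[F] Module.End F V)
      (AlgHom.id F (Module.End F V)) := by
    rw [hS]
    refine Algebra.adjoin_le ?_
    rintro x (rfl | rfl)
    · exact hA
    · exact hAstar
  exact hle hX
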